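/- arXiv:0902.1248 — 4 statements merged into one kernel-verified Lean document; each statement's English description precedes it below -/
import Mathlib

section
/- Let (x₀, ξ₀) ∈ Ω satisfy 𝔤_{(x₀,ξ₀)} = {0}. Then there is an open neighborhood U of (x₀, ξ₀) in ℝⁿ × ℝⁿ such that: (i) 𝔤_{(x,ξ)} = {0} for every (x, ξ) ∈ U; (ii) the derivative dJ(x,ξ) : ℝⁿ × ℝⁿ → 𝔤* is surjective at every point (x,ξ) ∈ U (so J is a submersion on U); and (iii) the critical set of ψ intersected with U × 𝔤 equals (Ω ∩ U) × {0}. -/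
attribute [local instance] Matrix.normedAddCommGroup Matrix.normedSpace

open Matrix

section Aux

variable {n : ℕ}

/-- Dot product with a fixed left vector, as a linear map. -/
noncomputable def dotL (v : Fin n → ℝ) : (Fin n → ℝ) →ₗ[ℝ] ℝ where
  toFun w := v ⬝ᵥ w
  map_add' a c := dotProduct_add v a c
  map_smul' c a := by simp [dotProduct_smul]

variable (𝔤 : Submodule ℝ (Matrix (Fin n) (Fin n) ℝ))

/-- `X ↦ X.val *ᵥ x` as a linear map on `𝔤`. -/
noncomputable def mvL (x : Fin n → ℝ) : ↥𝔤 →ₗ[ℝ] (Fin n → ℝ) where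
  toFun X := X.val *ᵥ x
  map_add' A B := by simp [Matrix.add_mulVec]
  map_smul' c A := by simp [Matrix.smul_mulVec]

/-- Dot product as a continuous bilinear map. -/
noncomputable def dotB : (Fin n → ℝ) →L[ℝ] (Fin n → ℝ) →L[ℝ] ℝ :=
  LinearMap.toContinuousLinearMap
  { toFun := fun v => LinearMap.toContinuousLinearMap (dotL v)
    map_add' := by intro a c; ext w; simp [dotL, add_dotProduct]
    map_smul' := by intro c a; ext w; simp [dotL, smul_dotProduct] }

@[simp] lemma dotB_apply (v w : Fin n → ℝ) : dotB v w = v ⬝ᵥ w := by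
  simp [dotB, dotL]

/-- `(X, x) ↦ X.val *ᵥ x` as a continuous bilinear map. -/
noncomputable def mvB : ↥𝔤 →L[ℝ] (Fin n → ℝ) →L[ℝ] (Fin n → ℝ) :=
  LinearMap.toContinuousLinearMap
  { toFun := fun X => LinearMap.toContinuousLinearMap (Matrix.mulVecLin X.val)
    map_add' := by intro A B; ext x; simp [Matrix.add_mulVec]
    map_smul' := by intro c A; ext x; simp [Matrix.smul_mulVec] }

@[simp] lemma mvB_apply (X : ↥𝔤) (x : Fin n → ℝ) : mvB 𝔤 X x = X.val *ᵥ x := by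
  simp [mvB]

end Aux

set_option maxHeartbeats 1000000 in
/-- If `(x₀, ξ₀) ∈ Ω` has trivial isotropy algebra, then there is an open
neighborhood `U` of `(x₀, ξ₀)` in `ℝⁿ × ℝⁿ` such that: (i) the isotropy algebra is trivial
at every point of `U`; (ii) the derivative `dJ(x,ξ) : ℝⁿ × ℝⁿ → 𝔤*` is surjective at every
point of `U` (so `J` is a submersion on `U`); and (iii) the critical set of `ψ` intersected
with `U × 𝔤` equals `(Ω ∩ U) × {0}`. -/
theorem statement2 (n : ℕ) (𝔤 : Submodule ℝ (Matrix (Fin n) (Fin n) ℝ))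
    (h𝔤 : ∀ A ∈ 𝔤, Aᵀ = -A)
    (ψ : (Fin n → ℝ) × (Fin n → ℝ) × ↥𝔤 → ℝ)
    (hψ : ∀ (x ξ : Fin n → ℝ) (X : ↥𝔤), ψ (x, ξ, X) = (X.val *ᵥ x) ⬝ᵥ ξ)
    (x₀ ξ₀ : Fin n → ℝ)
    (hΩ : ∀ A ∈ 𝔤, (A *ᵥ x₀) ⬝ᵥ ξ₀ = 0)
    (hiso : ∀ X : ↥𝔤, X.val *ᵥ x₀ = 0 → X.val *ᵥ ξ₀ = 0 → X = 0) :
    ∃ U : Set ((Fin n → ℝ) × (Fin n → ℝ)), IsOpen U ∧ (x₀, ξ₀) ∈ U ∧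
      (∀ p ∈ U, ∀ X : ↥𝔤, X.val *ᵥ p.1 = 0 → X.val *ᵥ p.2 = 0 → X = 0) ∧
      (∀ p ∈ U, ∀ φ : Module.Dual ℝ ↥𝔤, ∃ u η : Fin n → ℝ,
        ∀ A : ↥𝔤, φ A = (A.val *ᵥ u) ⬝ᵥ p.2 + (A.val *ᵥ p.1) ⬝ᵥ η) ∧
      (∀ (x ξ : Fin n → ℝ) (X : ↥𝔤), (x, ξ) ∈ U →
        (fderiv ℝ ψ (x, ξ, X) = 0 ↔ (∀ A ∈ 𝔤, (A *ᵥ x) ⬝ᵥ ξ = 0) ∧ X = 0)) := by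
  classical
  set d := Module.finrank ℝ ↥𝔤 with hd
  let b : Module.Basis (Fin d) ℝ ↥𝔤 := Module.finBasis ℝ ↥𝔤
  -- the skew-symmetry identity
  have skew : ∀ (A : ↥𝔤) (w ξv : Fin n → ℝ),
      (A.val *ᵥ w) ⬝ᵥ ξv = -(w ⬝ᵥ (A.val *ᵥ ξv)) := by
    intro A w ξv
    rw [dotProduct_comm, dotProduct_mulVec]
    have h1 : ξv ᵥ* A.val = A.valᵀ *ᵥ ξv := by
      rw [← Matrix.transpose_transpose A.val, Matrix.vecMul_transpose,
        Matrix.transpose_transpose]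
    rw [h1, h𝔤 A.val A.2, Matrix.neg_mulVec, neg_dotProduct, dotProduct_comm]
  -- Gram matrix of the family X ↦ (X x, X ξ)
  set G : ((Fin n → ℝ) × (Fin n → ℝ)) → Matrix (Fin d) (Fin d) ℝ :=
    fun p => Matrix.of fun i j =>
      ((b i).val *ᵥ p.1) ⬝ᵥ ((b j).val *ᵥ p.1) + ((b i).val *ᵥ p.2) ⬝ᵥ ((b j).val *ᵥ p.2)
    with hGdef
  -- mulVec of a sum
  have sumMv : ∀ (x : Fin n → ℝ) (c : Fin d → ℝ),
      ((b.equivFun.symm c).val *ᵥ x) = ∑ j, c j • ((b j).val *ᵥ x) := by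
    intro x c
    rw [b.equivFun_symm_apply]
    show mvL 𝔤 x (∑ j, c j • b j) = _
    rw [map_sum]
    simp [mvL]
  -- Gram matrix applied to coordinates
  have claimA : ∀ (p : (Fin n → ℝ) × (Fin n → ℝ)) (c : Fin d → ℝ) (i : Fin d),
      (G p *ᵥ c) i =
        ((b i).val *ᵥ p.1) ⬝ᵥ ((b.equivFun.symm c).val *ᵥ p.1)
        + ((b i).val *ᵥ p.2) ⬝ᵥ ((b.equivFun.symm c).val *ᵥ p.2) := by
    intro p c i
    rw [sumMv, sumMv]
    show _ = dotL ((b i).val *ᵥ p.1) (∑ j, c j • ((b j).val *ᵥ p.1))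
        + dotL ((b i).val *ᵥ p.2) (∑ j, c j • ((b j).val *ᵥ p.2))
    rw [map_sum, map_sum]
    simp only [_root_.map_smul, smul_eq_mul]
    show (fun j => G p i j) ⬝ᵥ c = _
    simp only [dotL, LinearMap.coe_mk, AddHom.coe_mk, hGdef, Matrix.of_apply, dotProduct]
    rw [← Finset.sum_add_distrib]
    refine Finset.sum_congr rfl fun j _ => ?_
    ring
  -- quadratic form identity
  have claimB : ∀ (p : (Fin n → ℝ) × (Fin n → ℝ)) (c : Fin d → ℝ),
      c ⬝ᵥ (G p *ᵥ c) =
        ((b.equivFun.symm c).val *ᵥ p.1) ⬝ᵥ ((b.equivFun.symm c).val *ᵥ p.1)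
        + ((b.equivFun.symm c).val *ᵥ p.2) ⬝ᵥ ((b.equivFun.symm c).val *ᵥ p.2) := by
    intro p c
    have h1 : c ⬝ᵥ (G p *ᵥ c) = ∑ i, c i * (G p *ᵥ c) i := by
      simp [dotProduct]
    have sumDot : ∀ (v : Fin n → ℝ) (f : Fin d → (Fin n → ℝ)),
        (∑ j, c j • f j) ⬝ᵥ v = ∑ j, c j * (f j ⬝ᵥ v) := by
      intro v f
      rw [dotProduct_comm]
      show dotL v (∑ j, c j • f j) = _
      rw [map_sum]
      simp only [_root_.map_smul, smul_eq_mul]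
      refine Finset.sum_congr rfl fun j _ => ?_
      show c j * (v ⬝ᵥ f j) = _
      rw [dotProduct_comm]
    have sumDot' : ∀ q w : Fin n → ℝ,
        ((b.equivFun.symm c).val *ᵥ q) ⬝ᵥ w = ∑ j, c j * (((b j).val *ᵥ q) ⬝ᵥ w) := by
      intro q w
      rw [sumMv q c]
      exact sumDot w _
    rw [h1, sumDot' p.1, sumDot' p.2, ← Finset.sum_add_distrib]
    refine Finset.sum_congr rfl fun i _ => ?_
    rw [claimA p c i, mul_add]
  set U : Set ((Fin n → ℝ) × (Fin n → ℝ)) := {p | (G p).det ≠ 0} with hUdef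
  -- triviality of isotropy on U
  have hU_triv : ∀ p ∈ U, ∀ X : ↥𝔤, X.val *ᵥ p.1 = 0 → X.val *ᵥ p.2 = 0 → X = 0 := by
    intro p hp X hx hξ
    set c := b.equivFun X with hc
    have hXc : b.equivFun.symm c = X := b.equivFun.symm_apply_apply X
    have h0 : G p *ᵥ c = 0 := by
      funext i
      rw [claimA p c i, hXc, hx, hξ]
      simp
    by_contra hX0
    have hc0 : c ≠ 0 := by
      intro h
      apply hX0
      rw [← hXc, h, map_zero]
    exact hp ((Matrix.exists_mulVec_eq_zero_iff).mp ⟨c, hc0, h0⟩)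
  -- the base point lies in U
  have hmem : (x₀, ξ₀) ∈ U := by
    intro hdet
    obtain ⟨c, hc0, hGc⟩ := (Matrix.exists_mulVec_eq_zero_iff).mpr hdet
    set X := b.equivFun.symm c with hX
    have hq : c ⬝ᵥ (G (x₀, ξ₀) *ᵥ c) = 0 := by rw [hGc]; simp
    rw [claimB] at hq
    have n1 : 0 ≤ (X.val *ᵥ x₀) ⬝ᵥ (X.val *ᵥ x₀) :=
      Finset.sum_nonneg fun i _ => mul_self_nonneg _
    have n2 : 0 ≤ (X.val *ᵥ ξ₀) ⬝ᵥ (X.val *ᵥ ξ₀) :=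
      Finset.sum_nonneg fun i _ => mul_self_nonneg _
    have hx : X.val *ᵥ x₀ = 0 := by
      apply dotProduct_self_eq_zero.mp; nlinarith
    have hξ : X.val *ᵥ ξ₀ = 0 := by
      apply dotProduct_self_eq_zero.mp; nlinarith
    have hX0 : X = 0 := hiso X hx hξ
    apply hc0
    have h2 := congrArg b.equivFun hX0
    rw [hX, b.equivFun.apply_symm_apply, map_zero] at h2
    exact h2
  -- openness of U
  have hU_open : IsOpen U := by
    have hcont : Continuous fun p : (Fin n → ℝ) × (Fin n → ℝ) => (G p).det := by
      apply Continuous.matrix_det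
      apply continuous_matrix
      intro i j
      exact ((continuous_const.matrix_mulVec continuous_fst).dotProduct
        (continuous_const.matrix_mulVec continuous_fst)).add
        ((continuous_const.matrix_mulVec continuous_snd).dotProduct
        (continuous_const.matrix_mulVec continuous_snd))
    exact isOpen_compl_singleton.preimage hcont
  refine ⟨U, hU_open, hmem, hU_triv, ?_, ?_⟩
  · -- surjectivity of dJ on U
    intro p hp φ
    let B : ((Fin n → ℝ) × (Fin n → ℝ)) →ₗ[ℝ] ↥𝔤 →ₗ[ℝ] ℝ :=
      LinearMap.mk₂ ℝ (fun q A => (A.val *ᵥ q.1) ⬝ᵥ p.2 + (A.val *ᵥ p.1) ⬝ᵥ q.2)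
        (by intro q r A
            simp only [Prod.fst_add, Prod.snd_add, Matrix.mulVec_add, add_dotProduct,
              dotProduct_add]
            ring)
        (by intro c q A
            simp only [Prod.smul_fst, Prod.smul_snd, Matrix.mulVec_smul, smul_dotProduct,
              dotProduct_smul, smul_eq_mul]
            ring)
        (by intro q A A'
            simp only [Submodule.coe_add, Matrix.add_mulVec, add_dotProduct]
            ring)
        (by intro c q A
            simp only [SetLike.val_smul, Matrix.smul_mulVec, smul_dotProduct,
              smul_eq_mul]
            ring)
    have hinj : ∀ A : ↥𝔤, B.flip A = 0 → A = 0 := by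
      intro A hA
      have hev : ∀ q : (Fin n → ℝ) × (Fin n → ℝ),
          (A.val *ᵥ q.1) ⬝ᵥ p.2 + (A.val *ᵥ p.1) ⬝ᵥ q.2 = 0 := by
        intro q
        have h2 := LinearMap.congr_fun hA q
        simpa [B] using h2
      have hx : A.val *ᵥ p.1 = 0 := by
        have h3 := hev (0, A.val *ᵥ p.1)
        simp only [Matrix.mulVec_zero, zero_dotProduct, zero_add] at h3
        exact dotProduct_self_eq_zero.mp h3
      have hξ : A.val *ᵥ p.2 = 0 := by
        have h3 := hev (A.val *ᵥ p.2, 0)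
        rw [skew A (A.val *ᵥ p.2) p.2, dotProduct_comm] at h3
        simp only [dotProduct_zero, add_zero, neg_eq_zero] at h3
        exact dotProduct_self_eq_zero.mp h3
      exact hU_triv p hp A hx hξ
    have hsurj : Function.Surjective B :=
      LinearMap.flip_injective_iff₁.mp
        (LinearMap.ker_eq_bot.mp (LinearMap.ker_eq_bot'.mpr hinj))
    obtain ⟨q, hq⟩ := hsurj φ
    refine ⟨q.1, q.2, fun A => ?_⟩
    have := LinearMap.congr_fun hq A
    simpa [B] using this.symm
  · -- the critical set of ψ
    intro x ξ X hxi
    have hψfun : ψ = fun p : (Fin n → ℝ) × (Fin n → ℝ) × ↥𝔤 =>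
        dotB (mvB 𝔤 p.2.2 p.1) p.2.1 := by
      funext p
      obtain ⟨px, pξ, pX⟩ := p
      rw [hψ px pξ pX]
      simp
    set π := ((ContinuousLinearMap.snd ℝ (Fin n → ℝ) ↥𝔤).comp
        (ContinuousLinearMap.snd ℝ (Fin n → ℝ) ((Fin n → ℝ) × ↥𝔤))).prod
        (ContinuousLinearMap.fst ℝ (Fin n → ℝ) ((Fin n → ℝ) × ↥𝔤)) with hπ
    set ρ := (ContinuousLinearMap.fst ℝ (Fin n → ℝ) ↥𝔤).comp
        (ContinuousLinearMap.snd ℝ (Fin n → ℝ) ((Fin n → ℝ) × ↥𝔤)) with hρ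
    have h1 := π.hasFDerivAt (x := (x, ξ, X))
    have h2 := ((mvB 𝔤).isBoundedBilinearMap.hasFDerivAt (X, x)).comp (x, ξ, X) h1
    have h3 := HasFDerivAt.prodMk h2 (ρ.hasFDerivAt (x := (x, ξ, X)))
    have hF' := (dotB.isBoundedBilinearMap.hasFDerivAt
        ((fun p : (Fin n → ℝ) × (Fin n → ℝ) × ↥𝔤 => (mvB 𝔤 p.2.2 p.1, p.2.1)) (x, ξ, X))).comp
        (x, ξ, X) h3
    have hF : HasFDerivAt ψ ((dotB.isBoundedBilinearMap.deriv (mvB 𝔤 X x, ξ)).comp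
        ((((mvB 𝔤).isBoundedBilinearMap.deriv (X, x)).comp π).prod ρ)) (x, ξ, X) := by
      rw [hψfun]
      exact hF'
    have hfd := hF.fderiv
    have Lapp : ∀ (u η : Fin n → ℝ) (Y : ↥𝔤),
        fderiv ℝ ψ (x, ξ, X) (u, η, Y)
          = (X.val *ᵥ x) ⬝ᵥ η + (X.val *ᵥ u + Y.val *ᵥ x) ⬝ᵥ ξ := by
      intro u η Y
      rw [hfd]
      simp [IsBoundedBilinearMap.deriv_apply, hπ, hρ]
      rw [← add_dotProduct]
      rfl
    constructor
    · intro h0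
      have hL : ∀ (u η : Fin n → ℝ) (Y : ↥𝔤),
          (X.val *ᵥ x) ⬝ᵥ η + (X.val *ᵥ u + Y.val *ᵥ x) ⬝ᵥ ξ = 0 := by
        intro u η Y
        rw [← Lapp u η Y, h0]
        rfl
      have hXx : X.val *ᵥ x = 0 := by
        have h4 := hL 0 (X.val *ᵥ x) 0
        simp only [Matrix.mulVec_zero, ZeroMemClass.coe_zero, Matrix.zero_mulVec,
          add_zero, zero_add, zero_dotProduct, dotProduct_zero] at h4
        exact dotProduct_self_eq_zero.mp (by linarith [h4])
      have hXξ : X.val *ᵥ ξ = 0 := by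
        have h4 := hL (X.val *ᵥ ξ) 0 0
        rw [hXx] at h4
        simp only [ZeroMemClass.coe_zero, Matrix.zero_mulVec, add_zero,
          zero_dotProduct, zero_add] at h4
        rw [skew X (X.val *ᵥ ξ) ξ, dotProduct_comm, neg_eq_zero] at h4
        exact dotProduct_self_eq_zero.mp h4
      refine ⟨?_, hU_triv (x, ξ) hxi X hXx hXξ⟩
      intro A hA
      have h4 := hL 0 0 ⟨A, hA⟩
      simp only [Matrix.mulVec_zero, dotProduct_zero, zero_dotProduct, zero_add] at h4
      simpa using h4
    · rintro ⟨hΩ', hX0⟩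
      refine ContinuousLinearMap.ext fun v => ?_
      obtain ⟨u, η, Y⟩ := v
      rw [Lapp u η Y, hX0]
      simp only [ZeroMemClass.coe_zero, Matrix.zero_mulVec, zero_dotProduct,
        zero_add, ContinuousLinearMap.zero_apply]
      exact hΩ' Y.val Y.2
end

section
/- Let (x, ξ) ∈ ℝⁿ × ℝⁿ satisfy 𝔤_{(x,ξ)} = {0}. Then the kernel (radical) of the second derivative bilinear form of ψ at the point (x, ξ, 0) equals (ker dJ(x,ξ)) × {0} ⊆ (ℝⁿ × ℝⁿ) × 𝔤, where dJ(x,ξ)(u,η)(B) = ⟨Bu, ξ⟩ + ⟨Bx, η⟩. Consequently, the restriction of this second derivative bilinear form to any linear complement of (ker dJ(x,ξ)) × {0} in ℝⁿ × ℝⁿ × 𝔤 is nondegenerate (the transversal Hessian of ψ along the regular part of its critical set is nondegenerate at such points). -/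
set_option maxSynthPendingDepth 3

attribute [local instance] Matrix.normedAddCommGroup Matrix.normedSpace

open Matrix

variable {n : ℕ} {𝔤 : Submodule ℝ (Matrix (Fin n) (Fin n) ℝ)}

section

@[reducible] private def matTop : TopologicalSpace (Matrix (Fin n) (Fin n) ℝ) :=
  @UniformSpace.toTopologicalSpace _ PseudoMetricSpace.toUniformSpace

attribute [local instance] matTop

private def tval (𝔤 : Submodule ℝ (Matrix (Fin n) (Fin n) ℝ))
    (a b c : (Fin n → ℝ) × (Fin n → ℝ) × ↥𝔤) : ℝ :=
  (c.2.2.val *ᵥ a.1) ⬝ᵥ b.2.1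

private noncomputable def t3 (a b : (Fin n → ℝ) × (Fin n → ℝ) × ↥𝔤) :
    ((Fin n → ℝ) × (Fin n → ℝ) × ↥𝔤) →L[ℝ] ℝ :=
  LinearMap.toContinuousLinearMap
    { toFun := fun c => tval 𝔤 a b c
      map_add' := fun c d => by simp [tval, Matrix.add_mulVec, add_dotProduct]
      map_smul' := fun r c => by simp [tval, Matrix.smul_mulVec, smul_dotProduct] }

@[simp] private lemma t3_apply (a b c : (Fin n → ℝ) × (Fin n → ℝ) × ↥𝔤) :
    t3 a b c = (c.2.2.val *ᵥ a.1) ⬝ᵥ b.2.1 := rfl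

private noncomputable def t2 (a : (Fin n → ℝ) × (Fin n → ℝ) × ↥𝔤) :
    ((Fin n → ℝ) × (Fin n → ℝ) × ↥𝔤) →L[ℝ]
      (((Fin n → ℝ) × (Fin n → ℝ) × ↥𝔤) →L[ℝ] ℝ) :=
  LinearMap.toContinuousLinearMap
    { toFun := fun b => t3 a b
      map_add' := fun b d => by
        refine ContinuousLinearMap.ext fun c => ?_
        simp [tval, dotProduct_add, ContinuousLinearMap.add_apply]
      map_smul' := fun r b => by
        refine ContinuousLinearMap.ext fun c => ?_
        simp [tval, dotProduct_smul, ContinuousLinearMap.smul_apply] }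

@[simp] private lemma t2_apply (a b c : (Fin n → ℝ) × (Fin n → ℝ) × ↥𝔤) :
    t2 a b c = (c.2.2.val *ᵥ a.1) ⬝ᵥ b.2.1 := rfl

private noncomputable def tC :
    ((Fin n → ℝ) × (Fin n → ℝ) × ↥𝔤) →L[ℝ]
      (((Fin n → ℝ) × (Fin n → ℝ) × ↥𝔤) →L[ℝ]
        (((Fin n → ℝ) × (Fin n → ℝ) × ↥𝔤) →L[ℝ] ℝ)) :=
  LinearMap.toContinuousLinearMap
    { toFun := fun a => t2 a
      map_add' := fun a d => by
        refine ContinuousLinearMap.ext fun b => ?_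
        refine ContinuousLinearMap.ext fun c => ?_
        simp [tval, Matrix.mulVec_add, dotProduct_add, ContinuousLinearMap.add_apply]
      map_smul' := fun r a => by
        refine ContinuousLinearMap.ext fun b => ?_
        refine ContinuousLinearMap.ext fun c => ?_
        simp [tval, Matrix.mulVec_smul, ContinuousLinearMap.smul_apply] }

@[simp] private lemma tC_apply (a b c : (Fin n → ℝ) × (Fin n → ℝ) × ↥𝔤) :
    tC (𝔤 := 𝔤) a b c = (c.2.2.val *ᵥ a.1) ⬝ᵥ b.2.1 := rfl

private noncomputable def u3 (a b : (Fin n → ℝ) × (Fin n → ℝ) × ↥𝔤) :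
    ((Fin n → ℝ) × (Fin n → ℝ) × ↥𝔤) →L[ℝ] ℝ :=
  LinearMap.toContinuousLinearMap
    { toFun := fun q => tval 𝔤 q a b + tval 𝔤 a q b + tval 𝔤 a b q
      map_add' := fun c d => by
        simp [tval, Matrix.add_mulVec, Matrix.mulVec_add, add_dotProduct,
          dotProduct_add]
        ring
      map_smul' := fun r c => by
        simp [tval, Matrix.smul_mulVec, Matrix.mulVec_smul, smul_dotProduct,
          dotProduct_smul]
        ring }

@[simp] private lemma u3_apply (a b q : (Fin n → ℝ) × (Fin n → ℝ) × ↥𝔤) :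
    u3 a b q = tval 𝔤 q a b + tval 𝔤 a q b + tval 𝔤 a b q := rfl

private noncomputable def u2 (a : (Fin n → ℝ) × (Fin n → ℝ) × ↥𝔤) :
    ((Fin n → ℝ) × (Fin n → ℝ) × ↥𝔤) →L[ℝ]
      (((Fin n → ℝ) × (Fin n → ℝ) × ↥𝔤) →L[ℝ] ℝ) :=
  LinearMap.toContinuousLinearMap
    { toFun := fun b => u3 a b
      map_add' := fun b d => by
        refine ContinuousLinearMap.ext fun q => ?_
        simp [tval, Matrix.add_mulVec, Matrix.mulVec_add, add_dotProduct,
          dotProduct_add, ContinuousLinearMap.add_apply]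
        ring
      map_smul' := fun r b => by
        refine ContinuousLinearMap.ext fun q => ?_
        simp [tval, Matrix.smul_mulVec, Matrix.mulVec_smul, smul_dotProduct,
          dotProduct_smul, ContinuousLinearMap.smul_apply]
        ring }

@[simp] private lemma u2_apply (a b q : (Fin n → ℝ) × (Fin n → ℝ) × ↥𝔤) :
    u2 a b q = tval 𝔤 q a b + tval 𝔤 a q b + tval 𝔤 a b q := rfl

private noncomputable def uC :
    ((Fin n → ℝ) × (Fin n → ℝ) × ↥𝔤) →L[ℝ]
      (((Fin n → ℝ) × (Fin n → ℝ) × ↥𝔤) →L[ℝ]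
        (((Fin n → ℝ) × (Fin n → ℝ) × ↥𝔤) →L[ℝ] ℝ)) :=
  LinearMap.toContinuousLinearMap
    { toFun := fun a => u2 a
      map_add' := fun a d => by
        refine ContinuousLinearMap.ext fun b => ?_
        refine ContinuousLinearMap.ext fun q => ?_
        simp [tval, Matrix.add_mulVec, Matrix.mulVec_add, add_dotProduct,
          dotProduct_add, ContinuousLinearMap.add_apply]
        ring
      map_smul' := fun r a => by
        refine ContinuousLinearMap.ext fun b => ?_
        refine ContinuousLinearMap.ext fun q => ?_
        simp [tval, Matrix.smul_mulVec, Matrix.mulVec_smul, smul_dotProduct,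
          dotProduct_smul, ContinuousLinearMap.smul_apply]
        ring }

@[simp] private lemma uC_apply (a b q : (Fin n → ℝ) × (Fin n → ℝ) × ↥𝔤) :
    uC (𝔤 := 𝔤) a b q = tval 𝔤 q a b + tval 𝔤 a q b + tval 𝔤 a b q := rfl

set_option maxHeartbeats 1000000 in
private lemma key {ψ : (Fin n → ℝ) × (Fin n → ℝ) × ↥𝔤 → ℝ}
    (hψe : ψ = fun p => tval 𝔤 p p p) (p0 p q : (Fin n → ℝ) × (Fin n → ℝ) × ↥𝔤) :
    fderiv ℝ (fderiv ℝ ψ) p0 p q =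
      tval 𝔤 q p0 p + tval 𝔤 p0 q p + tval 𝔤 p0 p q +
        tval 𝔤 q p p0 + tval 𝔤 p q p0 + tval 𝔤 p p0 q := by
  have hdiag : ∀ y : (Fin n → ℝ) × (Fin n → ℝ) × ↥𝔤,
      HasFDerivAt (fun z => tC (𝔤 := 𝔤) z z)
        ((tC (𝔤 := 𝔤)).precompR _ y (ContinuousLinearMap.id ℝ _) +
          (tC (𝔤 := 𝔤)).precompL _ (ContinuousLinearMap.id ℝ _) y) y := fun y =>
    (tC (𝔤 := 𝔤)).hasFDerivAt_of_bilinear (hasFDerivAt_id y) (hasFDerivAt_id y)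
  have hψD : ∀ y, HasFDerivAt ψ
      ((tC (𝔤 := 𝔤) y y).comp (ContinuousLinearMap.id ℝ _) +
        ((tC (𝔤 := 𝔤)).precompR _ y (ContinuousLinearMap.id ℝ _) +
          (tC (𝔤 := 𝔤)).precompL _ (ContinuousLinearMap.id ℝ _) y).flip y) y := by
    intro y
    have h2 := (hdiag y).clm_apply (hasFDerivAt_id y)
    have hfun : (fun y => tC (𝔤 := 𝔤) y y (id y)) = ψ := by
      rw [hψe]; funext z; exact tC_apply z z z
    exact hfun ▸ h2
  have hfd : fderiv ℝ ψ = fun y => uC (𝔤 := 𝔤) y y := by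
    funext y
    rw [(hψD y).fderiv]
    refine ContinuousLinearMap.ext fun q => ?_
    simp [tval, ContinuousLinearMap.add_apply, ContinuousLinearMap.comp_apply,
      ContinuousLinearMap.flip_apply, ContinuousLinearMap.precompR_apply,
      ContinuousLinearMap.precompL_apply]
    ring
  have hfd2 : HasFDerivAt (fderiv ℝ ψ)
      ((uC (𝔤 := 𝔤)).precompR _ p0 (ContinuousLinearMap.id ℝ _) +
        (uC (𝔤 := 𝔤)).precompL _ (ContinuousLinearMap.id ℝ _) p0) p0 := by
    rw [hfd]
    exact (uC (𝔤 := 𝔤)).hasFDerivAt_of_bilinear (hasFDerivAt_id p0) (hasFDerivAt_id p0)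
  rw [hfd2.fderiv]
  simp [ContinuousLinearMap.add_apply, ContinuousLinearMap.precompR_apply,
    ContinuousLinearMap.precompL_apply]
  ring

end

set_option maxHeartbeats 1000000 in
/-- If `(x, ξ)` has trivial isotropy algebra, then the kernel (radical) of
the second derivative bilinear form of `ψ` at `(x, ξ, 0)` equals `(ker dJ(x,ξ)) × {0}`,
where `dJ(x,ξ)(u,η)(B) = ⟨Bu, ξ⟩ + ⟨Bx, η⟩`. Consequently, the restriction of this bilinear
form to any linear complement `W` of `(ker dJ(x,ξ)) × {0}` in `ℝⁿ × ℝⁿ × 𝔤` is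
nondegenerate. -/
theorem statement5 (n : ℕ) (𝔤 : Submodule ℝ (Matrix (Fin n) (Fin n) ℝ))
    (h𝔤 : ∀ A ∈ 𝔤, Aᵀ = -A)
    (ψ : (Fin n → ℝ) × (Fin n → ℝ) × ↥𝔤 → ℝ)
    (hψ : ∀ (x ξ : Fin n → ℝ) (X : ↥𝔤), ψ (x, ξ, X) = (X.val *ᵥ x) ⬝ᵥ ξ)
    (x ξ : Fin n → ℝ)
    (hiso : ∀ X : ↥𝔤, X.val *ᵥ x = 0 → X.val *ᵥ ξ = 0 → X = 0) :
    {p : (Fin n → ℝ) × (Fin n → ℝ) × ↥𝔤 |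
        ∀ q : (Fin n → ℝ) × (Fin n → ℝ) × ↥𝔤,
          fderiv ℝ (fderiv ℝ ψ) (x, ξ, (0 : ↥𝔤)) p q = 0} =
      {p : (Fin n → ℝ) × (Fin n → ℝ) × ↥𝔤 |
        (∀ B ∈ 𝔤, (B *ᵥ p.1) ⬝ᵥ ξ + (B *ᵥ x) ⬝ᵥ p.2.1 = 0) ∧ p.2.2 = 0} ∧
    ∀ W : Submodule ℝ ((Fin n → ℝ) × (Fin n → ℝ) × ↥𝔤),
      (∀ p : (Fin n → ℝ) × (Fin n → ℝ) × ↥𝔤,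
          ((∀ B ∈ 𝔤, (B *ᵥ p.1) ⬝ᵥ ξ + (B *ᵥ x) ⬝ᵥ p.2.1 = 0) ∧ p.2.2 = 0) → p ∈ W → p = 0) →
      (∀ p : (Fin n → ℝ) × (Fin n → ℝ) × ↥𝔤,
          ∃ k, ((∀ B ∈ 𝔤, (B *ᵥ k.1) ⬝ᵥ ξ + (B *ᵥ x) ⬝ᵥ k.2.1 = 0) ∧ k.2.2 = 0) ∧
            ∃ w ∈ W, p = k + w) →
      ∀ w ∈ W, (∀ u ∈ W, fderiv ℝ (fderiv ℝ ψ) (x, ξ, (0 : ↥𝔤)) u w = 0) → w = 0 := by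
  have hψe : ψ = fun p => tval 𝔤 p p p := funext fun p => hψ p.1 p.2.1 p.2.2
  have key0 : ∀ p q : (Fin n → ℝ) × (Fin n → ℝ) × ↥𝔤,
      fderiv ℝ (fderiv ℝ ψ) (x, ξ, (0 : ↥𝔤)) p q =
        (p.2.2.val *ᵥ q.1) ⬝ᵥ ξ + (q.2.2.val *ᵥ p.1) ⬝ᵥ ξ +
          (p.2.2.val *ᵥ x) ⬝ᵥ q.2.1 + (q.2.2.val *ᵥ x) ⬝ᵥ p.2.1 := by
    intro p q
    erw [key hψe]
    simp [tval]
    ring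
  have fwd : ∀ p : (Fin n → ℝ) × (Fin n → ℝ) × ↥𝔤,
      (∀ q, fderiv ℝ (fderiv ℝ ψ) (x, ξ, (0 : ↥𝔤)) p q = 0) →
      (∀ B ∈ 𝔤, (B *ᵥ p.1) ⬝ᵥ ξ + (B *ᵥ x) ⬝ᵥ p.2.1 = 0) ∧ p.2.2 = 0 := by
    intro p hp
    have hp' : ∀ q : (Fin n → ℝ) × (Fin n → ℝ) × ↥𝔤,
        (p.2.2.val *ᵥ q.1) ⬝ᵥ ξ + (q.2.2.val *ᵥ p.1) ⬝ᵥ ξ +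
          (p.2.2.val *ᵥ x) ⬝ᵥ q.2.1 + (q.2.2.val *ᵥ x) ⬝ᵥ p.2.1 = 0 := fun q => by
      rw [← key0 p q]; exact hp q
    have hskew : (p.2.2.val)ᵀ = -p.2.2.val := h𝔤 _ p.2.2.2
    have h1 : p.2.2.val *ᵥ ξ = 0 := by
      have h := hp' (p.2.2.val *ᵥ ξ, 0, 0)
      simp only [ZeroMemClass.coe_zero, Matrix.zero_mulVec,
        zero_dotProduct, dotProduct_zero, add_zero, zero_add] at h
      rw [dotProduct_comm, dotProduct_mulVec, ← Matrix.mulVec_transpose, hskew,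
        Matrix.neg_mulVec, neg_dotProduct, neg_eq_zero, dotProduct_self_eq_zero] at h
      exact h
    have h2 : p.2.2.val *ᵥ x = 0 := by
      have h := hp' (0, p.2.2.val *ᵥ x, 0)
      simp only [ZeroMemClass.coe_zero, Matrix.zero_mulVec, Matrix.mulVec_zero,
        zero_dotProduct, dotProduct_zero, add_zero, zero_add] at h
      rwa [dotProduct_self_eq_zero] at h
    have h3 : p.2.2 = 0 := hiso p.2.2 h2 h1
    refine ⟨fun B hB => ?_, h3⟩
    have h := hp' (0, 0, ⟨B, hB⟩)
    simp only [ZeroMemClass.coe_zero, Matrix.zero_mulVec, Matrix.mulVec_zero,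
      zero_dotProduct, dotProduct_zero, zero_add, add_zero] at h
    linarith [h]
  constructor
  · ext p
    simp only [Set.mem_setOf_eq]
    constructor
    · exact fun hp => fwd p hp
    · rintro ⟨hcond, h3⟩ q
      rw [key0]
      have hz : p.2.2.val = 0 := by rw [h3]; rfl
      have h := hcond q.2.2.val q.2.2.2
      simp only [hz, Matrix.zero_mulVec, zero_dotProduct, dotProduct_zero,
        zero_add, add_zero]
      linarith [h]
  · intro W hW1 hW2 w hwW hw
    have hker : ∀ q, fderiv ℝ (fderiv ℝ ψ) (x, ξ, (0 : ↥𝔤)) w q = 0 := by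
      intro q
      obtain ⟨k, hk, u, huW, hq⟩ := hW2 q
      have hk3 : k.2.2.val = 0 := by rw [hk.2]; rfl
      have hwk : fderiv ℝ (fderiv ℝ ψ) (x, ξ, (0 : ↥𝔤)) w k = 0 := by
        rw [key0]
        have h4 := hk.1 w.2.2.val w.2.2.2
        simp only [hk3, Matrix.zero_mulVec, zero_dotProduct, dotProduct_zero,
          zero_add, add_zero]
        linarith [h4]
      have hwu : fderiv ℝ (fderiv ℝ ψ) (x, ξ, (0 : ↥𝔤)) w u = 0 := by
        have h5 := hw u huW
        rw [key0] at h5 ⊢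
        linarith [h5]
      rw [hq, map_add, hwk, hwu, add_zero]
    exact hW1 w (fwd w hker) hwW
end

section
/- Let E and F be finite-dimensional real normed vector spaces, U ⊆ E open, α : U → F twice continuously differentiable, and ψ : F → ℝ twice continuously differentiable on a neighborhood of α(z) for some z ∈ U. If the derivative of ψ vanishes at α(z), i.e. Dψ(α(z)) = 0, then the second derivative of the composition satisfies D²(ψ ∘ α)(z)(u, v) = D²ψ(α(z))(Dα(z)u, Dα(z)v) for all u, v ∈ E. (At a critical point of ψ, the Hessian of ψ ∘ α is the pullback of the Hessian of ψ along the derivative of α; this is Equation (15) of the paper and the basis of its Lemma 2.) -/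
/-- Let `E`, `F` be finite-dimensional real normed vector spaces, `U ⊆ E`
open, `α : U → F` twice continuously differentiable, and `ψ : F → ℝ` twice continuously
differentiable on a neighborhood of `α z` for some `z ∈ U`. If `Dψ(α z) = 0`, then
`D²(ψ ∘ α)(z)(u, v) = D²ψ(α z)(Dα(z) u, Dα(z) v)` for all `u, v ∈ E`. -/
theorem statement6 {E F : Type*}
    [NormedAddCommGroup E] [NormedSpace ℝ E] [FiniteDimensional ℝ E]
    [NormedAddCommGroup F] [NormedSpace ℝ F] [FiniteDimensional ℝ F]
    (U : Set E) (hU : IsOpen U) (α : E → F) (hα : ContDiffOn ℝ 2 α U)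
    (z : E) (hz : z ∈ U) (ψ : F → ℝ) (hψ : ContDiffAt ℝ 2 ψ (α z))
    (hcrit : fderiv ℝ ψ (α z) = 0) :
    ∀ u v : E,
      fderiv ℝ (fderiv ℝ (ψ ∘ α)) z u v =
        fderiv ℝ (fderiv ℝ ψ) (α z) (fderiv ℝ α z u) (fderiv ℝ α z v) := by
  intro u v
  have hαz : ContDiffAt ℝ 2 α z := hα.contDiffAt (hU.mem_nhds hz)
  have hαcont : ContinuousAt α z := hαz.continuousAt
  -- eventually, the chain rule holds
  have hev : ∀ᶠ x in nhds z, fderiv ℝ (ψ ∘ α) x =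
      ((fderiv ℝ ψ (α x)).comp (fderiv ℝ α x)) := by
    have h1 : ∀ᶠ x in nhds z, ContDiffAt ℝ 2 α x :=
      hαz.eventually (by norm_num)
    have h2 : ∀ᶠ x in nhds z, ContDiffAt ℝ 2 ψ (α x) :=
      hαcont.eventually (hψ.eventually (by norm_num))
    filter_upwards [h1, h2] with x hx1 hx2
    exact fderiv_comp x (hx2.differentiableAt two_ne_zero)
      (hx1.differentiableAt two_ne_zero)
  -- differentiability facts
  have hdψ : DifferentiableAt ℝ (fderiv ℝ ψ) (α z) :=
    (hψ.fderiv_right (m := 1) (by norm_num)).differentiableAt one_ne_zero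
  have hdα : DifferentiableAt ℝ (fderiv ℝ α) z :=
    (hαz.fderiv_right (m := 1) (by norm_num)).differentiableAt one_ne_zero
  have hαdiff : DifferentiableAt ℝ α z := hαz.differentiableAt two_ne_zero
  have hc : DifferentiableAt ℝ (fun x => fderiv ℝ ψ (α x)) z := hdψ.comp z hαdiff
  have key : fderiv ℝ (fderiv ℝ (ψ ∘ α)) z =
      fderiv ℝ (fun x => (fderiv ℝ ψ (α x)).comp (fderiv ℝ α x)) z :=
    Filter.EventuallyEq.fderiv_eq hev
  rw [key, fderiv_clm_comp hc hdα]
  have hcc : fderiv ℝ (fun x => fderiv ℝ ψ (α x)) z =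
      (fderiv ℝ (fderiv ℝ ψ) (α z)).comp (fderiv ℝ α z) :=
    fderiv_comp z hdψ hαdiff
  simp [hcrit, hcc]
end

section
/- The critical set of f is the linear subspace (ker L) × (range L)^⊥ of ℝᵐ × ℝⁿ, and the second derivative of f at any point is the constant symmetric bilinear form ((u, η), (v, ζ)) ↦ ⟨Lu, ζ⟩ + ⟨Lv, η⟩, whose kernel (radical) equals (ker L) × (range L)^⊥. In particular, at every critical point of f, the kernel of the Hessian of f coincides with the tangent space of the critical set of f. -/
open scoped RealInnerProductSpace

private theorem stmt9_bbm (m n : ℕ)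
    (L : EuclideanSpace ℝ (Fin m) →ₗ[ℝ] EuclideanSpace ℝ (Fin n)) :
    IsBoundedBilinearMap ℝ
      (fun p : EuclideanSpace ℝ (Fin m) × EuclideanSpace ℝ (Fin n) => ⟪L p.1, p.2⟫) := by
  set Lc := LinearMap.toContinuousLinearMap L with hLc
  have hL : ∀ x, L x = Lc x := fun x => rfl
  refine ⟨fun x₁ x₂ y => ?_, fun c x y => ?_, fun x y₁ y₂ => ?_, fun x y c => ?_,
    ‖Lc‖ + 1, by positivity, fun x y => ?_⟩
  · simp [hL, inner_add_left]
  · rw [map_smul, real_inner_smul_left]; rfl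
  · simp [hL, inner_add_right]
  · rw [real_inner_smul_right]; rfl
  · calc ‖⟪L x, y⟫‖ ≤ ‖L x‖ * ‖y‖ := norm_inner_le_norm _ _
      _ ≤ (‖Lc‖ * ‖x‖) * ‖y‖ := by
          gcongr; exact (hL x ▸ Lc.le_opNorm x)
      _ ≤ (‖Lc‖ + 1) * ‖x‖ * ‖y‖ := by nlinarith [norm_nonneg x, norm_nonneg y, norm_nonneg Lc]

/-- For the function `f(w, ξ) = ⟨Lw, ξ⟩` with `L : ℝᵐ → ℝⁿ` linear: the
critical set of `f` is the linear subspace `(ker L) × (range L)ᗮ`; the second derivative of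
`f` at any point is the constant symmetric bilinear form
`((u, η), (v, ζ)) ↦ ⟨Lu, ζ⟩ + ⟨Lv, η⟩`; and the kernel (radical) of this bilinear form also
equals `(ker L) × (range L)ᗮ`. In particular, at every critical point the kernel of the
Hessian coincides with the tangent space of the critical set. -/
theorem statement9 (m n : ℕ)
    (L : EuclideanSpace ℝ (Fin m) →ₗ[ℝ] EuclideanSpace ℝ (Fin n))
    (f : EuclideanSpace ℝ (Fin m) × EuclideanSpace ℝ (Fin n) → ℝ)
    (hf : ∀ (w : EuclideanSpace ℝ (Fin m)) (ξ : EuclideanSpace ℝ (Fin n)),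
      f (w, ξ) = ⟪L w, ξ⟫) :
    {p : EuclideanSpace ℝ (Fin m) × EuclideanSpace ℝ (Fin n) | fderiv ℝ f p = 0} =
        {p : EuclideanSpace ℝ (Fin m) × EuclideanSpace ℝ (Fin n) |
          p.1 ∈ LinearMap.ker L ∧ p.2 ∈ (LinearMap.range L)ᗮ} ∧
      (∀ (p : EuclideanSpace ℝ (Fin m) × EuclideanSpace ℝ (Fin n))
          (u v : EuclideanSpace ℝ (Fin m)) (η ζ : EuclideanSpace ℝ (Fin n)),
        fderiv ℝ (fderiv ℝ f) p (u, η) (v, ζ) = ⟪L u, ζ⟫ + ⟪L v, η⟫) ∧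
      {q : EuclideanSpace ℝ (Fin m) × EuclideanSpace ℝ (Fin n) |
          ∀ (v : EuclideanSpace ℝ (Fin m)) (ζ : EuclideanSpace ℝ (Fin n)),
            ⟪L q.1, ζ⟫ + ⟪L v, q.2⟫ = 0} =
        {p : EuclideanSpace ℝ (Fin m) × EuclideanSpace ℝ (Fin n) |
          p.1 ∈ LinearMap.ker L ∧ p.2 ∈ (LinearMap.range L)ᗮ} := by
  have hb := stmt9_bbm m n L
  have hfe : f = fun p : EuclideanSpace ℝ (Fin m) × EuclideanSpace ℝ (Fin n) =>
      ⟪L p.1, p.2⟫ := funext fun p => hf p.1 p.2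
  subst hfe
  -- first derivative
  have hD1 : ∀ p, fderiv ℝ (fun p : EuclideanSpace ℝ (Fin m) × EuclideanSpace ℝ (Fin n) =>
      ⟪L p.1, p.2⟫) p = hb.deriv p := fun p => hb.fderiv p
  have hD1' : (fderiv ℝ (fun p : EuclideanSpace ℝ (Fin m) × EuclideanSpace ℝ (Fin n) =>
      ⟪L p.1, p.2⟫)) = fun p => hb.deriv p := funext hD1
  -- the key characterization of vanishing of the bilinear form
  have key : ∀ (a : EuclideanSpace ℝ (Fin m)) (b : EuclideanSpace ℝ (Fin n)),
      (∀ (v : EuclideanSpace ℝ (Fin m)) (ζ : EuclideanSpace ℝ (Fin n)),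
        ⟪L a, ζ⟫ + ⟪L v, b⟫ = 0) ↔ (a ∈ LinearMap.ker L ∧ b ∈ (LinearMap.range L)ᗮ) := by
    intro a b
    constructor
    · intro h
      constructor
      · have h1 := h 0 (L a)
        simp only [map_zero, inner_zero_left, add_zero] at h1
        exact LinearMap.mem_ker.2 (inner_self_eq_zero.1 h1)
      · intro x hx
        obtain ⟨v, rfl⟩ := hx
        have h2 := h v 0
        simp only [inner_zero_right, zero_add] at h2
        exact h2
    · rintro ⟨h1, h2⟩ v ζ
      rw [LinearMap.mem_ker.1 h1, inner_zero_left, h2 (L v) ⟨v, rfl⟩, add_zero]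
  refine ⟨?_, ?_, ?_⟩
  · ext p
    simp only [Set.mem_setOf_eq, hD1]
    rw [← key p.1 p.2]
    constructor
    · intro h v ζ
      have := congrFun (congrArg DFunLike.coe h) (v, ζ)
      simpa [hb.deriv_apply, add_comm] using this
    · intro h
      refine ContinuousLinearMap.ext fun q => ?_
      have := h q.1 q.2
      simpa [hb.deriv_apply, add_comm] using this
  · intro p u v η ζ
    rw [hD1']
    have hlin := hb.isBoundedLinearMap_deriv
    have : fderiv ℝ (fun p => hb.deriv p) p = hlin.toContinuousLinearMap :=
      hlin.hasFDerivAt.fderiv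
    rw [this]
    have : IsBoundedLinearMap.toContinuousLinearMap _ hlin (u, η) = hb.deriv (u, η) := rfl
    rw [this, hb.deriv_apply]
  · ext q
    simp only [Set.mem_setOf_eq]
    exact key q.1 q.2
end
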